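/- arXiv:2411.08342 — 2 statements merged into one kernel-verified Lean document; each statement's English description precedes it below -/
import Mathlib

section
/- Let l ≥ 1 be an integer and let 0 ≤ k ≤ l−1. Then the linear span (over ℝ) of the two-variable polynomials {F^{(l,m)} : m = l, l−1, …, l−k} equals the linear span of the monomials {y^{l−1}, x·y^{l−2}, …, x^k·y^{l−k−1}}, i.e., of {x^j y^{l−1−j} : 0 ≤ j ≤ k}. -/
/-- The coefficient `γ_{lk}^{(m)} = (−1)^k 2^{−l} C(l,k) C(2l−2k,l) (l−2k)!/(l−2k−m)!`. -/
noncomputable def gam (l k m : ℕ) : ℝ :=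
  (-1 : ℝ) ^ k * (2 : ℝ)⁻¹ ^ l * (l.choose k : ℝ) * ((2 * l - 2 * k).choose l : ℝ) *
    ((l - 2 * k).factorial : ℝ) / ((l - 2 * k - m).factorial : ℝ)

/-- `D_l^m(x,y) = Σ_{k=0}^{⌊(l−m)/2⌋} γ_{lk}^{(m)} (x²+y²)^k x^{l−2k−m}`. -/
noncomputable def Dlm (l m : ℕ) (x y : ℝ) : ℝ :=
  ∑ k ∈ Finset.range ((l - m) / 2 + 1),
    gam l k m * (x ^ 2 + y ^ 2) ^ k * x ^ (l - 2 * k - m)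

/-- `F^{(l,m)}(x,y) = √(2(l−m)!/(l+m)!) · m·y^{m−1} · D_l^m(x,y)`. -/
noncomputable def Flm (l m : ℕ) (x y : ℝ) : ℝ :=
  Real.sqrt (2 * ((l - m).factorial : ℝ) / ((l + m).factorial : ℝ)) *
    ((m : ℝ) * y ^ (m - 1)) * Dlm l m x y

section Aux

open Polynomial Finset

theorem compA (l m : ℕ) (hm : m ≤ l) :
    Polynomial.eval (1:ℝ) (Polynomial.derivative^[l+m] (((X:ℝ[X]) + C (-1))^l * ((X:ℝ[X]) + C 1)^l))
    = ((l+m).choose m : ℝ) * (l.descFactorial m : ℝ) * (l.factorial : ℝ) * 2^(l-m) := by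
  rw [Polynomial.iterate_derivative_mul]
  rw [Polynomial.eval_finset_sum]
  rw [Finset.sum_eq_single m]
  · rw [Nat.add_sub_cancel, Polynomial.iterate_derivative_X_add_pow,
      Polynomial.iterate_derivative_X_add_pow, Nat.sub_self, Nat.descFactorial_self]
    simp only [smul_eq_mul, Polynomial.eval_smul, Polynomial.eval_mul, Polynomial.eval_pow,
      Polynomial.eval_add, Polynomial.eval_X, Polynomial.eval_C, nsmul_eq_mul,
      Polynomial.eval_natCast, Polynomial.eval_one, pow_zero]
    ring_nf
  · intro k hk hkm
    simp only [Finset.mem_range] at hk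
    simp only [Polynomial.iterate_derivative_X_add_pow, smul_mul_assoc, Polynomial.eval_smul,
      Polynomial.eval_mul, Polynomial.eval_smul, Polynomial.eval_pow, Polynomial.eval_add,
      Polynomial.eval_X, Polynomial.eval_C, smul_eq_mul]
    rcases lt_or_gt_of_ne hkm with h | h
    · have : l < l + m - k := by omega
      rw [Nat.descFactorial_eq_zero_iff_lt.mpr this]
      simp
    · have h1 : (1:ℝ) + (-1) = 0 := by ring
      rw [h1, zero_pow (by omega : l - (l + m - k) ≠ 0)]
      ring
  · intro h; exfalso; apply h; simp

theorem compB (l m : ℕ) (hm : m ≤ l) :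
    Polynomial.eval (1:ℝ) (Polynomial.derivative^[l+m] (((X:ℝ[X]) + C (-1))^l * ((X:ℝ[X]) + C 1)^l))
    = ∑ i ∈ Finset.range ((l-m)/2+1),
        (-1:ℝ)^i * (l.choose i : ℝ) * (((2*l-2*i).descFactorial (l+m) : ℕ) : ℝ) := by
  have hp : ((X:ℝ[X]) + C (-1))^l * ((X:ℝ[X]) + C 1)^l = (X^2 + C (-1))^l := by
    rw [← mul_pow]; congr 1; simp only [map_neg, map_one]; ring
  rw [hp, add_pow]
  have hterm : ∀ i, ((X:ℝ[X])^2)^i * (C (-1))^(l-i) * ((l.choose i : ℕ) : ℝ[X])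
      = C ((-1:ℝ)^(l-i) * (l.choose i : ℝ)) * X^(2*i) := by
    intro i
    rw [← pow_mul, ← C_pow, ← C_eq_natCast, C_mul]
    ring
  have : Polynomial.derivative^[l+m] (∑ i ∈ Finset.range (l+1),
        ((X:ℝ[X])^2)^i * (C (-1))^(l-i) * ((l.choose i : ℕ) : ℝ[X]))
      = ∑ i ∈ Finset.range (l+1),
        C ((-1:ℝ)^(l-i) * (l.choose i : ℝ)) * (C (((2*i).descFactorial (l+m) : ℕ) : ℝ) * X^(2*i - (l+m))) := by
    rw [Polynomial.iterate_derivative_sum]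
    refine Finset.sum_congr rfl fun i _ => ?_
    rw [hterm i, Polynomial.iterate_derivative_C_mul, Polynomial.iterate_derivative_X_pow_eq_C_mul]
  rw [this, Polynomial.eval_finset_sum]
  simp only [Polynomial.eval_mul, Polynomial.eval_C, Polynomial.eval_pow, Polynomial.eval_X,
    one_pow, mul_one]
  rw [← Finset.sum_range_reflect]
  have hre : ∀ i ∈ Finset.range (l+1),
      (-1:ℝ)^(l-(l+1-1-i)) * (l.choose (l+1-1-i) : ℝ) * (((2*(l+1-1-i)).descFactorial (l+m) : ℕ) : ℝ)
      = (-1:ℝ)^i * (l.choose i : ℝ) * (((2*l-2*i).descFactorial (l+m) : ℕ) : ℝ) := by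
    intro i hi
    simp only [Finset.mem_range] at hi
    have h1 : l + 1 - 1 - i = l - i := by omega
    have h2 : l - (l - i) = i := by omega
    have h3 : 2 * (l - i) = 2*l - 2*i := by omega
    rw [h1, h2, h3, Nat.choose_symm (by omega)]
  rw [Finset.sum_congr rfl hre]
  have hsub : Finset.range ((l-m)/2+1) ⊆ Finset.range (l+1) := by
    intro i hi
    simp only [Finset.mem_range] at hi ⊢
    omega
  rw [← Finset.sum_subset hsub]
  intro i hi hni
  simp only [Finset.mem_range] at hi hni
  have : 2*l - 2*i < l + m := by omega
  rw [Nat.descFactorial_eq_zero_iff_lt.mpr this]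
  simp

theorem gam_eq (l m i : ℕ) (hm : m ≤ l) (hi : i ≤ (l-m)/2) :
    gam l i m = (-1:ℝ)^i * (l.choose i : ℝ) * (((2*l-2*i).descFactorial (l+m) : ℕ) : ℝ)
      / ((2:ℝ)^l * (l.factorial : ℝ)) := by
  have h2i : 2*i ≤ l - m := by omega
  have hfac1 : ((2*l-2*i).choose l) * l.factorial * (l - 2*i).factorial = (2*l-2*i).factorial := by
    have := Nat.choose_mul_factorial_mul_factorial (show l ≤ 2*l-2*i by omega)
    rw [show 2*l-2*i-l = l-2*i by omega] at this
    linarith [this]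
  have hfac2 : ((2*l-2*i).descFactorial (l+m)) * (l - 2*i - m).factorial = (2*l-2*i).factorial := by
    rw [Nat.descFactorial_eq_factorial_mul_choose]
    have := Nat.choose_mul_factorial_mul_factorial (show l+m ≤ 2*l-2*i by omega)
    rw [show 2*l-2*i-(l+m) = l-2*i-m by omega] at this
    linarith [this]
  have hfac1' : (((2*l-2*i).choose l : ℕ) : ℝ) * (l.factorial : ℝ) * ((l - 2*i).factorial : ℝ)
      = ((2*l-2*i).factorial : ℝ) := by exact_mod_cast congrArg Nat.cast hfac1
  have hfac2' : (((2*l-2*i).descFactorial (l+m) : ℕ) : ℝ) * ((l - 2*i - m).factorial : ℝ)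
      = ((2*l-2*i).factorial : ℝ) := by exact_mod_cast congrArg Nat.cast hfac2
  rw [gam]
  have hne1 : ((l - 2*i - m).factorial : ℝ) ≠ 0 := Nat.cast_ne_zero.mpr (Nat.factorial_ne_zero _)
  have hne2 : ((l.factorial : ℕ) : ℝ) ≠ 0 := Nat.cast_ne_zero.mpr (Nat.factorial_ne_zero _)
  have hne3 : (2:ℝ)^l ≠ 0 := by positivity
  rw [inv_pow]
  field_simp
  linear_combination (l.choose i : ℝ) * (hfac1' - hfac2')

theorem Sgam_pos (l m : ℕ) (hm : m ≤ l) :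
    0 < ∑ i ∈ Finset.range ((l-m)/2+1), gam l i m := by
  have hAB : (∑ i ∈ Finset.range ((l-m)/2+1),
        (-1:ℝ)^i * (l.choose i : ℝ) * (((2*l-2*i).descFactorial (l+m) : ℕ) : ℝ))
      = ((l+m).choose m : ℝ) * (l.descFactorial m : ℝ) * (l.factorial : ℝ) * 2^(l-m) :=
    (compB l m hm).symm.trans (compA l m hm)
  have hsum : ∑ i ∈ Finset.range ((l-m)/2+1), gam l i m
      = (∑ i ∈ Finset.range ((l-m)/2+1),
          (-1:ℝ)^i * (l.choose i : ℝ) * (((2*l-2*i).descFactorial (l+m) : ℕ) : ℝ))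
        / ((2:ℝ)^l * (l.factorial : ℝ)) := by
    rw [Finset.sum_div]
    exact Finset.sum_congr rfl fun i hi =>
      gam_eq l m i hm (by simpa using Finset.mem_range.mp hi |> Nat.lt_succ_iff.mp)
  rw [hsum, hAB]
  have h1 : (0:ℝ) < ((l+m).choose m : ℝ) := by
    exact_mod_cast Nat.choose_pos (by omega)
  have h2 : (0:ℝ) < (l.descFactorial m : ℝ) := by
    exact_mod_cast Nat.pos_of_ne_zero (fun h => by omega ∘ Nat.descFactorial_eq_zero_iff_lt.mp <| h)
  have h3 : (0:ℝ) < (l.factorial : ℝ) := by exact_mod_cast Nat.factorial_pos l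
  positivity

/-- The monomial `x^j y^(l-1-j)` as a function on `ℝ × ℝ`. -/
noncomputable def eMon (l j : ℕ) : ℝ × ℝ → ℝ := fun q => q.1 ^ j * q.2 ^ (l - 1 - j)

theorem Flm_expand (l m : ℕ) (hm1 : 1 ≤ m) (hml : m ≤ l) :
    (fun q : ℝ × ℝ => Flm l m q.1 q.2) =
      ∑ i ∈ Finset.range ((l-m)/2+1), ∑ a ∈ Finset.range (i+1),
        (Real.sqrt (2 * ((l - m).factorial : ℝ) / ((l + m).factorial : ℝ)) * (m : ℝ) *
          gam l i m * (i.choose a : ℝ)) • eMon l ((l-m) - 2*(i-a)) := by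
  funext q
  obtain ⟨x, y⟩ := q
  simp only [Finset.sum_apply, Pi.smul_apply, smul_eq_mul, eMon, Flm, Dlm, Finset.mul_sum]
  refine Finset.sum_congr rfl fun i hi => ?_
  simp only [Finset.mem_range, Nat.lt_succ_iff] at hi
  have h2i : 2*i ≤ l - m := by omega
  rw [add_pow, Finset.mul_sum, Finset.sum_mul, Finset.mul_sum]
  refine Finset.sum_congr rfl fun a ha => ?_
  simp only [Finset.mem_range, Nat.lt_succ_iff] at ha
  have hx : (l-m) - 2*(i-a) = 2*a + (l - 2*i - m) := by omega
  have hy : l - 1 - ((l-m) - 2*(i-a)) = (m-1) + 2*(i-a) := by omega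
  rw [hy, hx, ← pow_mul, ← pow_mul, pow_add, pow_add]
  ring

theorem Flm_split (l m : ℕ) (hm1 : 1 ≤ m) (hml : m ≤ l) :
    (fun q : ℝ × ℝ => Flm l m q.1 q.2) =
      (Real.sqrt (2 * ((l - m).factorial : ℝ) / ((l + m).factorial : ℝ)) * (m : ℝ) *
          ∑ i ∈ Finset.range ((l-m)/2+1), gam l i m) • eMon l (l-m) +
      ∑ i ∈ Finset.range ((l-m)/2+1), ∑ a ∈ Finset.range i,
        (Real.sqrt (2 * ((l - m).factorial : ℝ) / ((l + m).factorial : ℝ)) * (m : ℝ) *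
          gam l i m * (i.choose a : ℝ)) • eMon l ((l-m) - 2*(i-a)) := by
  rw [Flm_expand l m hm1 hml]
  have h1 : ∀ i ∈ Finset.range ((l-m)/2+1),
      (∑ a ∈ Finset.range (i+1),
        (Real.sqrt (2 * ((l - m).factorial : ℝ) / ((l + m).factorial : ℝ)) * (m : ℝ) *
          gam l i m * (i.choose a : ℝ)) • eMon l ((l-m) - 2*(i-a)))
      = (∑ a ∈ Finset.range i,
          (Real.sqrt (2 * ((l - m).factorial : ℝ) / ((l + m).factorial : ℝ)) * (m : ℝ) *
            gam l i m * (i.choose a : ℝ)) • eMon l ((l-m) - 2*(i-a)))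
        + (Real.sqrt (2 * ((l - m).factorial : ℝ) / ((l + m).factorial : ℝ)) * (m : ℝ) *
            gam l i m) • eMon l (l-m) := by
    intro i _
    rw [Finset.sum_range_succ, Nat.sub_self, Nat.mul_zero, Nat.sub_zero, Nat.choose_self,
      Nat.cast_one, mul_one]
  rw [Finset.sum_congr rfl h1, Finset.sum_add_distrib, ← Finset.sum_smul, Finset.mul_sum, add_comm]

end Aux

/-- for `l ≥ 1` and `0 ≤ k ≤ l−1`, the span of `{F^{(l,m)} : l−k ≤ m ≤ l}`
equals the span of the monomials `{xʲ y^{l−1−j} : 0 ≤ j ≤ k}`. -/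
theorem stmt9 (l : ℕ) (hl : 1 ≤ l) (k : ℕ) (hk : k ≤ l - 1) :
    Submodule.span ℝ {f : ℝ × ℝ → ℝ | ∃ m : ℕ, l - k ≤ m ∧ m ≤ l ∧
        f = fun q => Flm l m q.1 q.2} =
      Submodule.span ℝ {f : ℝ × ℝ → ℝ | ∃ j : ℕ, j ≤ k ∧
        f = fun q => q.1 ^ j * q.2 ^ (l - 1 - j)} := by
  apply le_antisymm
  · rw [Submodule.span_le]
    rintro f ⟨m, hmk, hml, rfl⟩
    have hm1 : 1 ≤ m := by omega
    rw [Flm_split l m hm1 hml]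
    apply Submodule.add_mem
    · apply Submodule.smul_mem
      apply Submodule.subset_span
      exact ⟨l - m, by omega, rfl⟩
    · apply Submodule.sum_mem
      intro i hi
      apply Submodule.sum_mem
      intro a ha
      apply Submodule.smul_mem
      apply Submodule.subset_span
      exact ⟨(l-m) - 2*(i-a), by omega, rfl⟩
  · rw [Submodule.span_le]
    rintro f ⟨j, hj, rfl⟩
    have key : ∀ j, j ≤ k → eMon l j ∈ Submodule.span ℝ {f : ℝ × ℝ → ℝ | ∃ m : ℕ,
        l - k ≤ m ∧ m ≤ l ∧ f = fun q => Flm l m q.1 q.2} := by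
      intro j
      induction j using Nat.strong_induction_on with
      | _ j IH =>
        intro hj
        have hm1 : 1 ≤ l - j := by omega
        have hml : l - j ≤ l := by omega
        have hjm : l - (l - j) = j := by omega
        have hsplit := Flm_split l (l - j) hm1 hml
        rw [hjm] at hsplit
        set s := Real.sqrt (2 * (j.factorial : ℝ) / ((l + (l-j)).factorial : ℝ)) with hs
        set S := ∑ i ∈ Finset.range (j/2+1), gam l i (l-j) with hS
        have hspos : 0 < s := by
          rw [hs]
          apply Real.sqrt_pos.mpr
          have h1 : (0:ℝ) < (j.factorial : ℝ) := by exact_mod_cast Nat.factorial_pos _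
          have h2 : (0:ℝ) < ((l + (l-j)).factorial : ℝ) := by exact_mod_cast Nat.factorial_pos _
          positivity
        have hSpos : 0 < S := by
          have := Sgam_pos l (l-j) hml
          rw [hjm] at this
          exact this
        have hmpos : (0:ℝ) < ((l - j : ℕ) : ℝ) := by exact_mod_cast hm1
        have hc : s * ((l-j : ℕ) : ℝ) * S ≠ 0 := by positivity
        have hF : (fun q : ℝ × ℝ => Flm l (l-j) q.1 q.2) ∈ Submodule.span ℝ {f : ℝ × ℝ → ℝ |
            ∃ m : ℕ, l - k ≤ m ∧ m ≤ l ∧ f = fun q => Flm l m q.1 q.2} :=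
          Submodule.subset_span ⟨l - j, by omega, hml, rfl⟩
        have hrest : (∑ i ∈ Finset.range (j/2+1), ∑ a ∈ Finset.range i,
            (s * ((l-j : ℕ) : ℝ) * gam l i (l-j) * (i.choose a : ℝ)) • eMon l (j - 2*(i-a)))
            ∈ Submodule.span ℝ {f : ℝ × ℝ → ℝ | ∃ m : ℕ,
              l - k ≤ m ∧ m ≤ l ∧ f = fun q => Flm l m q.1 q.2} := by
          apply Submodule.sum_mem
          intro i hi
          apply Submodule.sum_mem
          intro a ha
          apply Submodule.smul_mem
          simp only [Finset.mem_range] at hi ha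
          exact IH (j - 2*(i-a)) (by omega) (by omega)
        have hsub := Submodule.sub_mem _ hF hrest
        rw [hsplit, add_sub_cancel_right] at hsub
        have := Submodule.smul_mem _ (s * ((l-j : ℕ) : ℝ) * S)⁻¹ hsub
        rwa [smul_smul, inv_mul_cancel₀ hc, one_smul] at this
    exact key j hj
end

section
/- Let 1 ≤ m ≤ l be integers. The polynomial function H^{(l,m)}(x,y,z) = √(2(l−m)!/(l+m)!) · Π_l^m(x,y,z) · B_m(y,z) is harmonic on all of ℝ³: ∂²H^{(l,m)}/∂x² + ∂²H^{(l,m)}/∂y² + ∂²H^{(l,m)}/∂z² = 0 at every point of ℝ³. -/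
/-- Points of ℝ³, represented as functions `Fin 3 → ℝ`. -/
abbrev R3 := Fin 3 → ℝ

/-- Partial derivative of a scalar function in the `i`-th coordinate direction. -/
noncomputable def pd (i : Fin 3) (f : R3 → ℝ) (x : R3) : ℝ :=
  fderiv ℝ f x (Pi.single i 1)

/-- Laplacian of a scalar function on ℝ³. -/
noncomputable def lap3 (f : R3 → ℝ) (x : R3) : ℝ :=
  ∑ i, pd i (fun y => pd i f y) x

/-- `B_m(y,z)`, the imaginary part of `(y+iz)^m`. -/
noncomputable def Bm (m : ℕ) (y z : ℝ) : ℝ := (((y : ℂ) + (z : ℂ) * Complex.I) ^ m).im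

/-- `Π_l^m(x,y,z) = Σ_{k=0}^{⌊(l−m)/2⌋} γ_{lk}^{(m)} (x²+y²+z²)^k x^{l−2k−m}`. -/
noncomputable def Pim (l m : ℕ) (x y z : ℝ) : ℝ :=
  ∑ k ∈ Finset.range ((l - m) / 2 + 1),
    gam l k m * (x ^ 2 + y ^ 2 + z ^ 2) ^ k * x ^ (l - 2 * k - m)

/-- The polynomial `H^{(l,m)}(x,y,z) = √(2(l−m)!/(l+m)!) Π_l^m(x,y,z) B_m(y,z)`. -/
noncomputable def Hc (l m : ℕ) (x y z : ℝ) : ℝ :=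
  Real.sqrt (2 * ((l - m).factorial : ℝ) / ((l + m).factorial : ℝ)) * Pim l m x y z * Bm m y z

/-- `H^{(l,m)}` as a function on ℝ³. -/
noncomputable def Hfun (l m : ℕ) : R3 → ℝ := fun v => Hc l m (v 0) (v 1) (v 2)

open Complex Finset ContinuousLinearMap

noncomputable def grad3 (g : Fin 3 → ℝ) : R3 →L[ℝ] ℝ :=
  g 0 • ContinuousLinearMap.proj 0 + g 1 • ContinuousLinearMap.proj 1
    + g 2 • ContinuousLinearMap.proj 2

lemma grad3_apply (g : Fin 3 → ℝ) (w : R3) :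
    grad3 g w = g 0 * w 0 + g 1 * w 1 + g 2 * w 2 := by
  simp [grad3]

def HasPD (f : R3 → ℝ) (v : R3) (g : Fin 3 → ℝ) : Prop := HasFDerivAt f (grad3 g) v

lemma HasPD.differentiableAt {f v g} (h : HasPD f v g) : DifferentiableAt ℝ f v :=
  HasFDerivAt.differentiableAt h

lemma HasPD.pd_eq {f v g} (h : HasPD f v g) (i : Fin 3) : pd i f v = g i := by
  have : fderiv ℝ f v = grad3 g := HasFDerivAt.fderiv h
  rw [pd, this, grad3_apply]
  fin_cases i <;> simp [Pi.single_apply] <;> ring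

lemma hasPD_const (c : ℝ) (v : R3) : HasPD (fun _ => c) v ![0,0,0] := by
  have h := hasFDerivAt_const (𝕜 := ℝ) c v
  unfold HasPD
  convert h using 1
  ext w
  simp [grad3_apply]

lemma hasPD_coord (j : Fin 3) (v : R3) :
    HasPD (fun w => w j) v (fun i => if i = j then 1 else 0) := by
  have h := (ContinuousLinearMap.proj (R := ℝ) (φ := fun _ : Fin 3 => ℝ) j).hasFDerivAt (x := v)
  unfold HasPD
  refine h.congr_fderiv ?_
  ext w
  fin_cases j <;> simp [grad3_apply]

lemma HasPD.add {f₁ f₂ v g₁ g₂} (h₁ : HasPD f₁ v g₁) (h₂ : HasPD f₂ v g₂) :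
    HasPD (fun w => f₁ w + f₂ w) v (fun i => g₁ i + g₂ i) := by
  have h := HasFDerivAt.fun_add h₁ h₂
  unfold HasPD
  refine h.congr_fderiv ?_
  ext w
  simp [grad3_apply]; ring

lemma HasPD.mul {f₁ f₂ v g₁ g₂} (h₁ : HasPD f₁ v g₁) (h₂ : HasPD f₂ v g₂) :
    HasPD (fun w => f₁ w * f₂ w) v (fun i => g₁ i * f₂ v + f₁ v * g₂ i) := by
  have h := HasFDerivAt.fun_mul h₁ h₂
  unfold HasPD
  refine h.congr_fderiv ?_
  ext w
  simp [grad3_apply]; ring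

lemma HasPD.pow {f v g} (h : HasPD f v g) (n : ℕ) :
    HasPD (fun w => f w ^ n) v (fun i => n * f v ^ (n-1) * g i) := by
  induction n with
  | zero =>
    simp
    convert hasPD_const 1 v using 1
    ext i; fin_cases i <;> rfl
  | succ n ih =>
      have h' := ih.mul h
      convert h' using 1
      · funext w; ring
      funext i
      rcases n with _ | n
      · simp
      · push_cast
        simp [pow_succ]
        ring

noncomputable def Cf : R3 → ℂ := fun v => (v 1 : ℂ) + (v 2 : ℂ) * Complex.I
noncomputable def Bf (m : ℕ) : R3 → ℝ := fun v => Bm m (v 1) (v 2)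
noncomputable def Af (m : ℕ) : R3 → ℝ := fun v => (Cf v ^ m).re

noncomputable def LC : R3 →L[ℝ] ℂ :=
  (ContinuousLinearMap.proj (R := ℝ) (φ := fun _ : Fin 3 => ℝ) 1).smulRight 1
    + (ContinuousLinearMap.proj (R := ℝ) (φ := fun _ : Fin 3 => ℝ) 2).smulRight Complex.I

lemma LC_apply (w : R3) : LC w = (w 1 : ℂ) + (w 2 : ℂ) * Complex.I := by
  simp [LC, Complex.real_smul]

lemma hasFDeriv_Cf (v : R3) : HasFDerivAt Cf LC v := by
  have : Cf = fun w => LC w := by funext w; rw [LC_apply]; rfl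
  rw [this]
  exact LC.hasFDerivAt

lemma hasFDeriv_Cfpow (n : ℕ) (v : R3) :
    HasFDerivAt (fun w => Cf w ^ n) ((n : ℂ) • Cf v ^ (n-1) • LC) v := by
  induction n with
  | zero =>
      have h := hasFDerivAt_const (𝕜 := ℝ) (1 : ℂ) v
      simp only [pow_zero]
      refine h.congr_fderiv ?_
      ext w
      simp
  | succ n ih =>
      have h := ih.fun_mul (hasFDeriv_Cf v)
      have e : (fun w => Cf w ^ n * Cf w) = fun w => Cf w ^ (n+1) := by
        funext w; rw [← pow_succ]
      rw [e] at h
      refine h.congr_fderiv ?_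
      ext w
      rcases n with _ | n
      · simp
      · push_cast
        simp [pow_succ, Nat.succ_sub_one]
        ring

lemma Bf_eq (m : ℕ) : Bf m = fun v => (Cf v ^ m).im := rfl

lemma hasPD_B (m : ℕ) (v : R3) :
    HasPD (Bf m) v ![0, m * Bf (m-1) v, m * Af (m-1) v] := by
  have h := (Complex.imCLM.hasFDerivAt (x := Cf v ^ m)).comp v (hasFDeriv_Cfpow m v)
  have h2 : HasFDerivAt (Bf m) (Complex.imCLM.comp ((m : ℂ) • Cf v ^ (m-1) • LC)) v := h
  unfold HasPD
  convert h2 using 1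
  ext w
  simp [grad3_apply, LC_apply, Bf, Af, Bm, Cf]
  ring

lemma hasPD_A (m : ℕ) (v : R3) :
    HasPD (Af m) v ![0, m * Af (m-1) v, -(m * Bf (m-1) v)] := by
  have h := (Complex.reCLM.hasFDerivAt (x := Cf v ^ m)).comp v (hasFDeriv_Cfpow m v)
  have h2 : HasFDerivAt (Af m) (Complex.reCLM.comp ((m : ℂ) • Cf v ^ (m-1) • LC)) v := h
  unfold HasPD
  convert h2 using 1
  ext w
  simp [grad3_apply, LC_apply, Bf, Af, Bm, Cf]
  ring

noncomputable def Sf : R3 → ℝ := fun v => v 0 ^ 2 + v 1 ^ 2 + v 2 ^ 2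
noncomputable def Tm (k a m : ℕ) : R3 → ℝ := fun v => Sf v ^ k * v 0 ^ a * Bf m v
noncomputable def D0 (k a m : ℕ) : R3 → ℝ := fun v =>
  2 * (k:ℝ) * Sf v ^ (k-1) * v 0 * v 0 ^ a * Bf m v
    + (a:ℝ) * Sf v ^ k * v 0 ^ (a-1) * Bf m v
noncomputable def D1 (k a m : ℕ) : R3 → ℝ := fun v =>
  2 * (k:ℝ) * Sf v ^ (k-1) * v 1 * v 0 ^ a * Bf m v
    + (m:ℝ) * Sf v ^ k * v 0 ^ a * Bf (m-1) v
noncomputable def D2 (k a m : ℕ) : R3 → ℝ := fun v =>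
  2 * (k:ℝ) * Sf v ^ (k-1) * v 2 * v 0 ^ a * Bf m v
    + (m:ℝ) * Sf v ^ k * v 0 ^ a * Af (m-1) v


lemma euler_B (m : ℕ) (v : R3) : Bf (m+1) v = v 1 * Bf m v + v 2 * Af m v := by
  simp [Bf, Af, Bm, Cf, pow_succ, Complex.mul_im]
  ring

lemma hasPD_S (v : R3) : HasPD Sf v ![2 * v 0, 2 * v 1, 2 * v 2] := by
  have h := (((hasPD_coord 0 v).pow 2).add ((hasPD_coord 1 v).pow 2)).add ((hasPD_coord 2 v).pow 2)
  have h' : HasPD Sf v _ := h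
  convert h' using 2
  rename_i i
  fin_cases i <;> simp <;> ring

lemma hasPD_T (k a m : ℕ) (v : R3) :
    HasPD (Tm k a m) v ![D0 k a m v, D1 k a m v, D2 k a m v] := by
  have h := (((hasPD_S v).pow k).mul ((hasPD_coord 0 v).pow a)).mul (hasPD_B m v)
  have h' : HasPD (Tm k a m) v _ := h
  convert h' using 2
  rename_i i
  fin_cases i <;> simp [D0, D1, D2] <;> ring

lemma pd0_D0 (k a m : ℕ) (v : R3) :
    DifferentiableAt ℝ (D0 k a m) v ∧ pd 0 (D0 k a m) v =
      4*(k:ℝ)*((k-1 : ℕ):ℝ) * Sf v ^ (k-1-1) * v 0 ^ 2 * v 0 ^ a * Bf m v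
      + 2*(k:ℝ) * Sf v ^ (k-1) * v 0 ^ a * Bf m v
      + 4*(k:ℝ)*((a:ℕ):ℝ) * Sf v ^ (k-1) * v 0 * v 0 ^ (a-1) * Bf m v
      + (a:ℝ)*((a-1 : ℕ):ℝ) * Sf v ^ k * v 0 ^ (a-1-1) * Bf m v := by
  have h : HasPD (D0 k a m) v _ :=
    (((((hasPD_const (2*(k:ℝ)) v).mul ((hasPD_S v).pow (k-1))).mul (hasPD_coord 0 v)).mul
        ((hasPD_coord 0 v).pow a)).mul (hasPD_B m v)).add
      ((((hasPD_const (a:ℝ) v).mul ((hasPD_S v).pow k)).mul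
        ((hasPD_coord 0 v).pow (a-1))).mul (hasPD_B m v))
  refine ⟨h.differentiableAt, ?_⟩
  rw [h.pd_eq]
  simp
  ring

lemma pd1_D1 (k a m : ℕ) (v : R3) :
    DifferentiableAt ℝ (D1 k a m) v ∧ pd 1 (D1 k a m) v =
      4*(k:ℝ)*((k-1 : ℕ):ℝ) * Sf v ^ (k-1-1) * v 1 ^ 2 * v 0 ^ a * Bf m v
      + 2*(k:ℝ) * Sf v ^ (k-1) * v 0 ^ a * Bf m v
      + 4*(k:ℝ)*(m:ℝ) * Sf v ^ (k-1) * v 1 * v 0 ^ a * Bf (m-1) v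
      + (m:ℝ)*((m-1 : ℕ):ℝ) * Sf v ^ k * v 0 ^ a * Bf (m-1-1) v := by
  have h : HasPD (D1 k a m) v _ :=
    (((((hasPD_const (2*(k:ℝ)) v).mul ((hasPD_S v).pow (k-1))).mul (hasPD_coord 1 v)).mul
        ((hasPD_coord 0 v).pow a)).mul (hasPD_B m v)).add
      ((((hasPD_const (m:ℝ) v).mul ((hasPD_S v).pow k)).mul
        ((hasPD_coord 0 v).pow a)).mul (hasPD_B (m-1) v))
  refine ⟨h.differentiableAt, ?_⟩
  rw [h.pd_eq]
  simp
  ring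

lemma pd2_D2 (k a m : ℕ) (v : R3) :
    DifferentiableAt ℝ (D2 k a m) v ∧ pd 2 (D2 k a m) v =
      4*(k:ℝ)*((k-1 : ℕ):ℝ) * Sf v ^ (k-1-1) * v 2 ^ 2 * v 0 ^ a * Bf m v
      + 2*(k:ℝ) * Sf v ^ (k-1) * v 0 ^ a * Bf m v
      + 4*(k:ℝ)*(m:ℝ) * Sf v ^ (k-1) * v 2 * v 0 ^ a * Af (m-1) v
      - (m:ℝ)*((m-1 : ℕ):ℝ) * Sf v ^ k * v 0 ^ a * Bf (m-1-1) v := by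
  have h : HasPD (D2 k a m) v _ :=
    (((((hasPD_const (2*(k:ℝ)) v).mul ((hasPD_S v).pow (k-1))).mul (hasPD_coord 2 v)).mul
        ((hasPD_coord 0 v).pow a)).mul (hasPD_B m v)).add
      ((((hasPD_const (m:ℝ) v).mul ((hasPD_S v).pow k)).mul
        ((hasPD_coord 0 v).pow a)).mul (hasPD_A (m-1) v))
  refine ⟨h.differentiableAt, ?_⟩
  rw [h.pd_eq]
  simp
  ring

lemma lap_T (k a m : ℕ) (hm : 1 ≤ m) (v : R3) :
    lap3 (Tm k a m) v =
      (2*(k:ℝ)*(2*(k:ℝ)+1) + 4*(k:ℝ)*(a:ℝ) + 4*(k:ℝ)*(m:ℝ)) * Sf v ^ (k-1) * v 0 ^ a * Bf m v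
      + (a:ℝ)*((a-1:ℕ):ℝ) * Sf v ^ k * v 0 ^ (a-2) * Bf m v := by
  obtain ⟨m, rfl⟩ : ∃ m', m = m'+1 := ⟨m-1, (Nat.succ_pred_eq_of_pos hm).symm⟩
  unfold lap3
  rw [Fin.sum_univ_three]
  rw [show (fun y => pd 0 (Tm k a (m+1)) y) = D0 k a (m+1) from
        funext fun y => by rw [(hasPD_T _ _ _ y).pd_eq]; simp]
  rw [show (fun y => pd 1 (Tm k a (m+1)) y) = D1 k a (m+1) from
        funext fun y => by rw [(hasPD_T _ _ _ y).pd_eq]; simp]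
  rw [show (fun y => pd 2 (Tm k a (m+1)) y) = D2 k a (m+1) from
        funext fun y => by rw [(hasPD_T _ _ _ y).pd_eq]; simp]
  rw [(pd0_D0 k a (m+1) v).2, (pd1_D1 k a (m+1) v).2, (pd2_D2 k a (m+1) v).2]
  rcases k with _|_|k <;> rcases a with _|_|a <;>
    · simp only [euler_B, Nat.add_sub_cancel, Nat.succ_sub_one, Sf, Nat.sub_self,
        Nat.zero_sub, Nat.sub_zero, Nat.cast_zero, Nat.cast_one, Nat.cast_add, pow_zero,
        Nat.cast_ofNat, Nat.add_sub_cancel_left, pow_succ]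
      push_cast
      ring

lemma diff_T (k a m : ℕ) : Differentiable ℝ (Tm k a m) :=
  fun v => (hasPD_T k a m v).differentiableAt

lemma pdT_eq (k a m : ℕ) :
    (fun y => pd 0 (Tm k a m) y) = D0 k a m
    ∧ (fun y => pd 1 (Tm k a m) y) = D1 k a m
    ∧ (fun y => pd 2 (Tm k a m) y) = D2 k a m :=
  ⟨funext fun y => by rw [(hasPD_T k a m y).pd_eq]; simp,
   funext fun y => by rw [(hasPD_T k a m y).pd_eq]; simp,
   funext fun y => by rw [(hasPD_T k a m y).pd_eq]; simp⟩

lemma diff_pdT (k a m : ℕ) (i : Fin 3) : Differentiable ℝ (fun w => pd i (Tm k a m) w) := by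
  have h0 : Differentiable ℝ (fun w => pd 0 (Tm k a m) w) := by
    rw [(pdT_eq k a m).1]; exact fun v => (pd0_D0 k a m v).1
  have h1 : Differentiable ℝ (fun w => pd 1 (Tm k a m) w) := by
    rw [(pdT_eq k a m).2.1]; exact fun v => (pd1_D1 k a m v).1
  have h2 : Differentiable ℝ (fun w => pd 2 (Tm k a m) w) := by
    rw [(pdT_eq k a m).2.2]; exact fun v => (pd2_D2 k a m v).1
  fin_cases i
  · exact h0
  · exact h1
  · exact h2

lemma lap3_sum_smul (s : Finset ℕ) (c : ℕ → ℝ) (f : ℕ → R3 → ℝ)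
    (h1 : ∀ k, Differentiable ℝ (f k)) (h2 : ∀ k i, Differentiable ℝ (fun w => pd i (f k) w))
    (v : R3) :
    lap3 (fun w => ∑ k ∈ s, c k * f k w) v = ∑ k ∈ s, c k * lap3 (f k) v := by
  have e1 : ∀ i : Fin 3, (fun y => pd i (fun w => ∑ k ∈ s, c k * f k w) y)
      = fun y => ∑ k ∈ s, c k * pd i (f k) y := by
    intro i
    funext y
    unfold pd
    rw [fderiv_fun_sum (fun k _ => ((h1 k y).const_mul (c k)))]
    rw [ContinuousLinearMap.sum_apply]
    refine Finset.sum_congr rfl fun k _ => ?_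
    rw [fderiv_const_mul (h1 k y)]
    simp
  unfold lap3
  rw [Fin.sum_univ_three]
  rw [e1 0, e1 1, e1 2]
  have e2 : ∀ (i : Fin 3) (y : R3), pd i (fun w => ∑ k ∈ s, c k * pd i (f k) w) y
      = ∑ k ∈ s, c k * pd i (fun w => pd i (f k) w) y := by
    intro i y
    show fderiv ℝ (fun w => ∑ k ∈ s, c k * pd i (f k) w) y (Pi.single i 1) = _
    rw [fderiv_fun_sum (fun k _ => ((h2 k i y).const_mul (c k)))]
    rw [ContinuousLinearMap.sum_apply]
    refine Finset.sum_congr rfl fun k _ => ?_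
    rw [fderiv_const_mul (h2 k i y)]
    simp [pd]
  rw [e2 0 v, e2 1 v, e2 2 v, ← Finset.sum_add_distrib, ← Finset.sum_add_distrib]
  refine Finset.sum_congr rfl fun k _ => ?_
  rw [Fin.sum_univ_three]
  ring

set_option maxHeartbeats 1000000 in
lemma gam_rec (l m k : ℕ) (h : m + 2*k + 2 ≤ l) :
    gam l (k+1) m * (2*((k:ℝ)+1)*(2*((k:ℝ)+1)+1) + 4*((k:ℝ)+1)*((l-2*(k+1)-m : ℕ):ℝ)
        + 4*((k:ℝ)+1)*(m:ℝ))
      + gam l k m * ((l-2*k-m : ℕ):ℝ) * ((l-2*k-m-1 : ℕ):ℝ) = 0 := by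
  obtain ⟨j, rfl⟩ : ∃ j, l = m + 2*k + 2 + j := ⟨l - (m+2*k+2), by omega⟩
  unfold gam
  rw [show m + 2*k + 2 + j - 2*(k+1) - m = j from by omega,
      show m + 2*k + 2 + j - 2*k - m - 1 = j + 1 from by omega,
      show m + 2*k + 2 + j - 2*k - m = j + 2 from by omega,
      show m + 2*k + 2 + j - 2*(k+1) = m + j from by omega,
      show m + 2*k + 2 + j - 2*k = m + j + 2 from by omega,
      show 2*(m + 2*k + 2 + j) - 2*(k+1) = (m + 2*k + 2 + j) + (m + j) from by omega,
      show 2*(m + 2*k + 2 + j) - 2*k = (m + 2*k + 2 + j) + (m + j + 2) from by omega]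
  rw [Nat.cast_add_choose (K := ℝ), Nat.cast_add_choose (K := ℝ)]
  rw [Nat.cast_choose ℝ (show k+1 ≤ m + 2*k + 2 + j from by omega),
      Nat.cast_choose ℝ (show k ≤ m + 2*k + 2 + j from by omega)]
  rw [show m + 2*k + 2 + j - (k+1) = m + k + j + 1 from by omega,
      show m + 2*k + 2 + j - k = (m + k + j + 1) + 1 from by omega]
  rw [show (m + 2*k + 2 + j) + (m + j + 2) = (((m + 2*k + 2 + j) + (m + j)) + 1) + 1 from by omega]
  rw [show m + j + 2 = (m + j + 1) + 1 from rfl, show j + 2 = (j + 1) + 1 from rfl]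
  simp only [Nat.factorial_succ, pow_succ]
  push_cast
  have nz : ∀ n : ℕ, ((n.factorial : ℝ)) ≠ 0 := fun n => Nat.cast_ne_zero.2 (Nat.factorial_ne_zero n)
  field_simp
  ring

lemma key_sum (l m : ℕ) (hm : 1 ≤ m) (hml : m ≤ l) (S X B : ℝ) :
    ∑ k ∈ Finset.range ((l-m)/2 + 1), gam l k m *
      ((2*(k:ℝ)*(2*(k:ℝ)+1) + 4*(k:ℝ)*((l-2*k-m : ℕ):ℝ) + 4*(k:ℝ)*(m:ℝ))
          * S ^ (k-1) * X ^ (l-2*k-m) * B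
        + ((l-2*k-m : ℕ):ℝ)*((l-2*k-m-1 : ℕ):ℝ) * S ^ k * X ^ (l-2*k-m-2) * B) = 0 := by
  rw [Finset.sum_congr rfl (fun k _ => mul_add (gam l k m) _ _), Finset.sum_add_distrib]
  rw [Finset.sum_range_succ' (fun k => gam l k m *
        ((2*(k:ℝ)*(2*(k:ℝ)+1) + 4*(k:ℝ)*((l-2*k-m : ℕ):ℝ) + 4*(k:ℝ)*(m:ℝ))
          * S ^ (k-1) * X ^ (l-2*k-m) * B)) ((l-m)/2)]
  rw [Finset.sum_range_succ (fun k => gam l k m *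
        (((l-2*k-m : ℕ):ℝ)*((l-2*k-m-1 : ℕ):ℝ) * S ^ k * X ^ (l-2*k-m-2) * B)) ((l-m)/2)]
  have hlast : gam l ((l-m)/2) m *
      (((l-2*((l-m)/2)-m : ℕ):ℝ)*((l-2*((l-m)/2)-m-1 : ℕ):ℝ) * S ^ ((l-m)/2)
        * X ^ (l-2*((l-m)/2)-m-2) * B) = 0 := by
    have h2 : l - 2*((l-m)/2) - m = 0 ∨ l - 2*((l-m)/2) - m = 1 := by omega
    rcases h2 with h2 | h2 <;> rw [h2] <;> simp
  have hzero : gam l 0 m *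
      ((2*((0:ℕ):ℝ)*(2*((0:ℕ):ℝ)+1) + 4*((0:ℕ):ℝ)*((l-2*0-m : ℕ):ℝ) + 4*((0:ℕ):ℝ)*(m:ℝ))
        * S ^ (0-1) * X ^ (l-2*0-m) * B) = 0 := by
    simp
  rw [hlast, hzero, add_zero, add_zero, ← Finset.sum_add_distrib]
  refine Finset.sum_eq_zero fun k hk => ?_
  have hk' : m + 2*k + 2 ≤ l := by
    have := Finset.mem_range.1 hk
    omega
  have hg := gam_rec l m k hk'
  rw [show l - 2*(k+1) - m = l - 2*k - m - 2 from by omega] at hg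
  rw [Nat.add_sub_cancel, show l - 2*(k+1) - m = l - 2*k - m - 2 from by omega]
  push_cast at hg ⊢
  linear_combination (S ^ k * X ^ (l - 2*k - m - 2) * B) * hg

/-- for `1 ≤ m ≤ l`, `H^{(l,m)}` is harmonic on all of ℝ³. -/
theorem stmt13 (l m : ℕ) (hm : 1 ≤ m) (hml : m ≤ l) :
    ∀ v : R3, lap3 (Hfun l m) v = 0 := by
  intro v
  set c := Real.sqrt (2 * ((l - m).factorial : ℝ) / ((l + m).factorial : ℝ)) with hc
  have hrw : Hfun l m = fun w => ∑ k ∈ Finset.range ((l-m)/2+1),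
      (c * gam l k m) * Tm k (l-2*k-m) m w := by
    funext w
    simp only [Hfun, Hc, Pim, Tm, Sf, Bf, ← hc]
    rw [Finset.mul_sum, Finset.sum_mul]
    refine Finset.sum_congr rfl fun k _ => ?_
    ring
  rw [hrw]
  rw [lap3_sum_smul _ _ _ (fun k => diff_T _ _ _) (fun k i => diff_pdT _ _ _ i) v]
  have h2 : ∑ k ∈ Finset.range ((l-m)/2+1), c * gam l k m * lap3 (Tm k (l-2*k-m) m) v
      = c * ∑ k ∈ Finset.range ((l-m)/2 + 1), gam l k m *
      ((2*(k:ℝ)*(2*(k:ℝ)+1) + 4*(k:ℝ)*((l-2*k-m : ℕ):ℝ) + 4*(k:ℝ)*(m:ℝ))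
          * Sf v ^ (k-1) * v 0 ^ (l-2*k-m) * Bf m v
        + ((l-2*k-m : ℕ):ℝ)*((l-2*k-m-1 : ℕ):ℝ) * Sf v ^ k * v 0 ^ (l-2*k-m-2) * Bf m v) := by
    rw [Finset.mul_sum]
    refine Finset.sum_congr rfl fun k _ => ?_
    rw [lap_T k (l-2*k-m) m hm v]
    ring
  rw [h2, key_sum l m hm hml (Sf v) (v 0) (Bf m v), mul_zero]
end
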